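/- arXiv:1511.06907 — 2 statements merged into one kernel-verified Lean document; each statement's English description precedes it below -/
import Mathlib

section
/- If (RG)^- is anticommutative, then for all x, y ∈ G with x^* ≠ x and y^* ≠ y: if xy ≠ yx then 1 + σ(xy) = σ(x) + σ(y) in R; if xy = yx then 2(1 + σ(xy)) = 0 = 2(σ(x) + σ(y)) in R. -/
open Finsupp

/-- The generalized oriented map σ* on the group ring RG. -/
noncomputable def sigmaStar {R : Type} [CommRing R] {G : Type} [Group G]
    (inv : G → G) (σ : G →* Rˣ) (α : MonoidAlgebra R G) : MonoidAlgebra R G :=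
  MonoidAlgebra.ofCoeff (α.coeff.sum fun x a => Finsupp.single (inv x) ((σ x : R) * a))

/-- The set of skew-symmetric elements of RG under σ*. -/
def skewSet {R : Type} [CommRing R] {G : Type} [Group G]
    (inv : G → G) (σ : G →* Rˣ) : Set (MonoidAlgebra R G) :=
  {α | sigmaStar inv σ α = -α}

section
variable {R : Type} [CommRing R] {G : Type} [Group G] (inv : G → G) (σ : G →* Rˣ)

lemma sigmaStar_single (g : G) (a : R) :
    sigmaStar inv σ (MonoidAlgebra.single g a) = MonoidAlgebra.single (inv g) ((σ g : R) * a) := by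
  unfold sigmaStar; rw [MonoidAlgebra.coeff_single, Finsupp.sum_single_index (by simp)]; rfl

lemma sigmaStar_add (α β : MonoidAlgebra R G) :
    sigmaStar inv σ (α + β) = sigmaStar inv σ α + sigmaStar inv σ β := by
  unfold sigmaStar
  rw [MonoidAlgebra.coeff_add, Finsupp.sum_add_index' (fun g => by simp) (fun g b c => by rw [mul_add, Finsupp.single_add]), MonoidAlgebra.ofCoeff_add]

lemma gamma_mem (hinv : ∀ g : G, inv (inv g) = g)
    (hcompat : ∀ g : G, g * inv g ∈ σ.ker) (g : G) :
    (MonoidAlgebra.single g (1:R) + MonoidAlgebra.single (inv g) (-(σ g : R))) ∈ skewSet inv σ := by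
  have hc : (σ (inv g) : R) * (σ g : R) = 1 := by
    have h1 : σ (g * inv g) = 1 := hcompat g
    rw [map_mul] at h1
    have := congrArg (Units.val) h1
    push_cast at this
    linear_combination this
  show sigmaStar inv σ _ = _
  rw [sigmaStar_add, sigmaStar_single, sigmaStar_single, hinv]
  rw [mul_one, mul_neg]
  rw [show (σ (inv g) : R) * (σ g : R) = 1 from hc]
  rw [neg_add, ← MonoidAlgebra.single_neg, ← MonoidAlgebra.single_neg, neg_neg]
  exact add_comm _ _

end

lemma expand_prod {R : Type} [CommRing R] {G : Type} [Group G] (a a' b b' : G) (c d : R) :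
    ((MonoidAlgebra.single a (1:R) + MonoidAlgebra.single a' c) *
      (MonoidAlgebra.single b 1 + MonoidAlgebra.single b' d) : MonoidAlgebra R G)
      = MonoidAlgebra.single (a*b) 1 + MonoidAlgebra.single (a*b') d
        + MonoidAlgebra.single (a'*b) c + MonoidAlgebra.single (a'*b') (c*d) := by
  simp only [add_mul, mul_add, MonoidAlgebra.single_mul_single, one_mul, mul_one]
  abel


theorem stmt11 {R : Type} [CommRing R] (hchar : ringChar R ≠ 2) {G : Type} [Group G]
    (inv : G → G) (hmul : ∀ x y : G, inv (x * y) = inv y * inv x)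
    (hinv : ∀ x : G, inv (inv x) = x) (σ : G →* Rˣ) (hnt : σ ≠ 1)
    (hcompat : ∀ x : G, x * inv x ∈ σ.ker)
    (hanti : ∀ α ∈ skewSet inv σ, ∀ β ∈ skewSet inv σ, α * β + β * α = 0)
    (x y : G) (hx : inv x ≠ x) (hy : inv y ≠ y) :
    (x * y ≠ y * x → 1 + (σ (x * y) : R) = (σ x : R) + (σ y : R)) ∧
    (x * y = y * x → 2 * (1 + (σ (x * y) : R)) = 0 ∧ 2 * ((σ x : R) + (σ y : R)) = 0) := by
  classical
  have hval : ∀ g : G, (σ g : R) * (σ (inv g) : R) = 1 := by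
    intro g
    have h1 : σ g * σ (inv g) = 1 := by rw [← map_mul]; exact hcompat g
    have := congrArg (Units.val) h1
    push_cast at this
    linear_combination this
  have hs2 := hval x
  have ht2 := hval y
  have hstR : ((σ (x*y) : Rˣ) : R) = ((σ x : Rˣ) : R) * ((σ y : Rˣ) : R) := by
    rw [map_mul]; push_cast; ring
  have hone2 : (2:R) = 0 → (1:R) = 0 := by
    intro h20
    have hdvd : ringChar R ∣ 2 := by
      have : ((2:ℕ) : R) = 0 := by push_cast; exact h20
      exact (ringChar.spec R 2).mp this
    rcases (Nat.prime_two).eq_one_or_self_of_dvd (ringChar R) hdvd with h1 | h1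
    · have : ((1:ℕ) : R) = 0 := (ringChar.spec R 1).mpr (by rw [h1])
      simpa using this
    · exact absurd h1 hchar
  have hmemx := gamma_mem inv σ hinv hcompat x
  have hmemy := gamma_mem inv σ hinv hcompat y
  have hxy0 := hanti _ hmemx _ hmemy
  rw [expand_prod, expand_prod] at hxy0
  have hA : (((σ x : Rˣ) : R) - 1) * (((σ y : Rˣ) : R) - 1) + (((σ y : Rˣ) : R) - 1) * (((σ x : Rˣ) : R) - 1) = 0 := by
    have hφ := congrArg ((MonoidAlgebra.lift R R G) ((Units.coeHom R).comp σ)) (hanti _ hmemx _ hmemy)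
    simp only [map_add, map_mul, map_zero, MonoidAlgebra.lift_single, MonoidHom.coe_comp,
      Units.coeHom_apply, Function.comp_apply, smul_eq_mul] at hφ
    have r1 : 1*((σ x : Rˣ) : R) + -((σ x : Rˣ) : R)*((σ (inv x) : Rˣ) : R) = ((σ x : Rˣ) : R) - 1 := by linear_combination -hs2
    have r2 : 1*((σ y : Rˣ) : R) + -((σ y : Rˣ) : R)*((σ (inv y) : Rˣ) : R) = ((σ y : Rˣ) : R) - 1 := by linear_combination -ht2
    rw [r1, r2] at hφ
    exact hφ
  have hb : ((Finsupp.single (x*y) (1:R) + Finsupp.single (x*inv y) (-((σ y : Rˣ) : R))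
      + Finsupp.single (inv x*y) (-((σ x : Rˣ) : R)) + Finsupp.single (inv x*inv y) ((-((σ x : Rˣ) : R))*(-((σ y : Rˣ) : R))))
      + (Finsupp.single (y*x) (1:R) + Finsupp.single (y*inv x) (-((σ x : Rˣ) : R))
      + Finsupp.single (inv y*x) (-((σ y : Rˣ) : R)) + Finsupp.single (inv y*inv x) ((-((σ y : Rˣ) : R))*(-((σ x : Rˣ) : R)))) : G →₀ R)
      = 0 := congrArg MonoidAlgebra.coeff hxy0
  have n1 : x*inv y ≠ x*y := fun h => hy (mul_left_cancel h)
  have n2 : inv x*y ≠ x*y := fun h => hx (mul_right_cancel h)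
  constructor
  · -- noncommuting case
    intro hne
    rw [hstR]
    have n3 : y*x ≠ x*y := fun h => hne h.symm
    have hg := congrFun (congrArg DFunLike.coe hb) (x*y)
    simp only [Finsupp.add_apply, Finsupp.single_apply, Finsupp.coe_zero, Pi.zero_apply,
      if_true] at hg
    simp only [if_neg n1, if_neg n2, if_neg n3] at hg
    by_cases hd : inv y * inv x = x*y
    · simp only [if_pos hd] at hg
      by_cases hc : inv x * inv y = x*y
      · exfalso
        apply hne
        have h1 := congrArg inv hc
        rw [hmul, hinv, hinv] at h1
        rw [hmul] at h1
        exact (h1.trans hd).symm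
      simp only [if_neg hc] at hg
      have ed := congrArg (fun g : G => ((σ g : Rˣ) : R)) hd
      simp only [map_mul, Units.val_mul] at ed
      have ec2 : ((σ (inv x) : Rˣ) : R) * ((σ (inv y) : Rˣ) : R) = ((σ x : Rˣ) : R) * ((σ y : Rˣ) : R) := by linear_combination ed
      by_cases ha : inv y * x = x*y
      · simp only [if_pos ha] at hg
        by_cases hbb : y * inv x = x*y
        · simp only [if_pos hbb] at hg
          linear_combination hg
        · simp only [if_neg hbb] at hg
          have ea := congrArg (fun g : G => ((σ g : Rˣ) : R)) ha
          simp only [map_mul, Units.val_mul] at ea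
          have m1 : ((σ (inv y) : Rˣ) : R) = ((σ y : Rˣ) : R) := by linear_combination ((σ (inv x) : Rˣ) : R)*ea - (((σ (inv y) : Rˣ) : R) - ((σ y : Rˣ) : R))*hs2
          have htt : ((σ y : Rˣ) : R) * ((σ y : Rˣ) : R) = 1 := by linear_combination ht2 - ((σ y : Rˣ) : R)*m1
          have ec' : ((σ (inv x) : Rˣ) : R) * ((σ y : Rˣ) : R) = ((σ x : Rˣ) : R) * ((σ y : Rˣ) : R) := by linear_combination ec2 - ((σ (inv x) : Rˣ) : R)*m1
          have m2 : ((σ (inv x) : Rˣ) : R) = ((σ x : Rˣ) : R) := by linear_combination ((σ (inv y) : Rˣ) : R)*ec' - (((σ (inv x) : Rˣ) : R) - ((σ x : Rˣ) : R))*ht2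
          have hss : ((σ x : Rˣ) : R) * ((σ x : Rˣ) : R) = 1 := by linear_combination hs2 - ((σ x : Rˣ) : R)*m2
          have k1 : ((σ x : Rˣ) : R) + ((σ y : Rˣ) : R) = 1 := by linear_combination ((σ y : Rˣ) : R)*hg + (1 - ((σ x : Rˣ) : R))*htt
          have k2 : ((σ x : Rˣ) : R)*((σ y : Rˣ) : R) + ((σ x : Rˣ) : R) = 0 := by linear_combination hg + k1
          have k3 : ((σ y : Rˣ) : R) = -1 := by linear_combination ((σ x : Rˣ) : R)*k2 - (((σ y : Rˣ) : R)+1)*hss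
          have k4 : ((σ x : Rˣ) : R) = 2 := by linear_combination -hg + (((σ x : Rˣ) : R) - 1)*k3
          have k5 : 2*((σ x : Rˣ) : R) = 0 := by linear_combination -hA + 2*hg
          have k6 : (2:R) = 0 := by linear_combination ((σ x : Rˣ) : R)*k5 - 2*hss
          have k7 : ((σ x : Rˣ) : R) = 0 := by linear_combination k4 + k6
          have h10 : (1:R) = 0 := by linear_combination ((σ x : Rˣ) : R)*k7 - hss
          linear_combination (1 + ((σ x : Rˣ) : R)*((σ y : Rˣ) : R) - ((σ x : Rˣ) : R) - ((σ y : Rˣ) : R))*h10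
      · simp only [if_neg ha] at hg
        by_cases hbb : y * inv x = x*y
        · simp only [if_pos hbb] at hg
          have eb := congrArg (fun g : G => ((σ g : Rˣ) : R)) hbb
          simp only [map_mul, Units.val_mul] at eb
          have m1 : ((σ (inv x) : Rˣ) : R) = ((σ x : Rˣ) : R) := by linear_combination ((σ (inv y) : Rˣ) : R)*eb - (((σ (inv x) : Rˣ) : R) - ((σ x : Rˣ) : R))*ht2
          have hss : ((σ x : Rˣ) : R) * ((σ x : Rˣ) : R) = 1 := by linear_combination hs2 - ((σ x : Rˣ) : R)*m1
          have ec' : ((σ (inv y) : Rˣ) : R) * ((σ x : Rˣ) : R) = ((σ y : Rˣ) : R) * ((σ x : Rˣ) : R) := by linear_combination ec2 - ((σ (inv y) : Rˣ) : R)*m1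
          have m2 : ((σ (inv y) : Rˣ) : R) = ((σ y : Rˣ) : R) := by linear_combination ((σ (inv x) : Rˣ) : R)*ec' - (((σ (inv y) : Rˣ) : R) - ((σ y : Rˣ) : R))*hs2
          have htt : ((σ y : Rˣ) : R) * ((σ y : Rˣ) : R) = 1 := by linear_combination ht2 - ((σ y : Rˣ) : R)*m2
          have k1 : ((σ x : Rˣ) : R) + ((σ y : Rˣ) : R) = 1 := by linear_combination ((σ x : Rˣ) : R)*hg + (1 - ((σ y : Rˣ) : R))*hss
          have k2 : ((σ x : Rˣ) : R)*((σ y : Rˣ) : R) + ((σ y : Rˣ) : R) = 0 := by linear_combination hg + k1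
          have k3 : ((σ x : Rˣ) : R) = -1 := by linear_combination ((σ y : Rˣ) : R)*k2 - (((σ x : Rˣ) : R)+1)*htt
          have k4 : ((σ y : Rˣ) : R) = 2 := by linear_combination -hg + (((σ y : Rˣ) : R) - 1)*k3
          have k5 : 2*((σ y : Rˣ) : R) = 0 := by linear_combination -hA + 2*hg
          have k6 : (2:R) = 0 := by linear_combination ((σ y : Rˣ) : R)*k5 - 2*htt
          have k7 : ((σ y : Rˣ) : R) = 0 := by linear_combination k4 + k6
          have h10 : (1:R) = 0 := by linear_combination ((σ y : Rˣ) : R)*k7 - htt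
          linear_combination (1 + ((σ x : Rˣ) : R)*((σ y : Rˣ) : R) - ((σ x : Rˣ) : R) - ((σ y : Rˣ) : R))*h10
        · -- S5 : only d
          simp only [if_neg hbb] at hg
          have hself : inv (x*y) = x*y := by rw [hmul]; exact hd
          have hmemp := gamma_mem inv σ hinv hcompat (x*y)
          rw [hself, hstR] at hmemp
          have hp := hanti _ hmemp _ hmemy
          rw [expand_prod, expand_prod] at hp
          have hb2 : ((Finsupp.single ((x*y)*y) (1:R) + Finsupp.single ((x*y)*inv y) (-((σ y : Rˣ) : R))
              + Finsupp.single ((x*y)*y) (-(((σ x : Rˣ) : R)*((σ y : Rˣ) : R))) + Finsupp.single ((x*y)*inv y) ((-(((σ x : Rˣ) : R)*((σ y : Rˣ) : R)))*(-((σ y : Rˣ) : R))))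
              + (Finsupp.single (y*(x*y)) (1:R) + Finsupp.single (y*(x*y)) (-(((σ x : Rˣ) : R)*((σ y : Rˣ) : R)))
              + Finsupp.single (inv y*(x*y)) (-((σ y : Rˣ) : R)) + Finsupp.single (inv y*(x*y)) ((-((σ y : Rˣ) : R))*(-(((σ x : Rˣ) : R)*((σ y : Rˣ) : R))))) : G →₀ R)
              = 0 := congrArg MonoidAlgebra.coeff hp
          have hg2 := congrFun (congrArg DFunLike.coe hb2) ((x*y)*y)
          simp only [Finsupp.add_apply, Finsupp.single_apply, Finsupp.coe_zero, Pi.zero_apply,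
            if_true] at hg2
          have d2 : (x*y)*inv y ≠ (x*y)*y := fun h => hy (mul_left_cancel h)
          have d3 : y*(x*y) ≠ (x*y)*y := fun h =>
            hne (mul_right_cancel ((mul_assoc y x y).trans h)).symm
          have d4 : inv y*(x*y) ≠ (x*y)*y := fun h =>
            ha (mul_right_cancel ((mul_assoc (inv y) x y).trans h))
          simp only [if_neg d2, if_neg d3, if_neg d4] at hg2
          have k2 : (2:R) = 0 := by linear_combination hg + hg2
          have h10 := hone2 k2
          linear_combination (1 + ((σ x : Rˣ) : R)*((σ y : Rˣ) : R) - ((σ x : Rˣ) : R) - ((σ y : Rˣ) : R))*h10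
    · simp only [if_neg hd] at hg
      by_cases hc : inv x * inv y = x*y
      · simp only [if_pos hc] at hg
        have ec2 := congrArg (fun g : G => ((σ g : Rˣ) : R)) hc
        simp only [map_mul, Units.val_mul] at ec2
        by_cases ha : inv y * x = x*y
        · simp only [if_pos ha] at hg
          by_cases hbb : y * inv x = x*y
          · simp only [if_pos hbb] at hg
            linear_combination hg
          · simp only [if_neg hbb] at hg
            have ea := congrArg (fun g : G => ((σ g : Rˣ) : R)) ha
            simp only [map_mul, Units.val_mul] at ea
            have m1 : ((σ (inv y) : Rˣ) : R) = ((σ y : Rˣ) : R) := by linear_combination ((σ (inv x) : Rˣ) : R)*ea - (((σ (inv y) : Rˣ) : R) - ((σ y : Rˣ) : R))*hs2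
            have htt : ((σ y : Rˣ) : R) * ((σ y : Rˣ) : R) = 1 := by linear_combination ht2 - ((σ y : Rˣ) : R)*m1
            have ec' : ((σ (inv x) : Rˣ) : R) * ((σ y : Rˣ) : R) = ((σ x : Rˣ) : R) * ((σ y : Rˣ) : R) := by linear_combination ec2 - ((σ (inv x) : Rˣ) : R)*m1
            have m2 : ((σ (inv x) : Rˣ) : R) = ((σ x : Rˣ) : R) := by linear_combination ((σ (inv y) : Rˣ) : R)*ec' - (((σ (inv x) : Rˣ) : R) - ((σ x : Rˣ) : R))*ht2
            have hss : ((σ x : Rˣ) : R) * ((σ x : Rˣ) : R) = 1 := by linear_combination hs2 - ((σ x : Rˣ) : R)*m2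
            have k1 : ((σ x : Rˣ) : R) + ((σ y : Rˣ) : R) = 1 := by linear_combination ((σ y : Rˣ) : R)*hg + (1 - ((σ x : Rˣ) : R))*htt
            have k2 : ((σ x : Rˣ) : R)*((σ y : Rˣ) : R) + ((σ x : Rˣ) : R) = 0 := by linear_combination hg + k1
            have k3 : ((σ y : Rˣ) : R) = -1 := by linear_combination ((σ x : Rˣ) : R)*k2 - (((σ y : Rˣ) : R)+1)*hss
            have k4 : ((σ x : Rˣ) : R) = 2 := by linear_combination -hg + (((σ x : Rˣ) : R) - 1)*k3
            have k5 : 2*((σ x : Rˣ) : R) = 0 := by linear_combination -hA + 2*hg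
            have k6 : (2:R) = 0 := by linear_combination ((σ x : Rˣ) : R)*k5 - 2*hss
            have k7 : ((σ x : Rˣ) : R) = 0 := by linear_combination k4 + k6
            have h10 : (1:R) = 0 := by linear_combination ((σ x : Rˣ) : R)*k7 - hss
            linear_combination (1 + ((σ x : Rˣ) : R)*((σ y : Rˣ) : R) - ((σ x : Rˣ) : R) - ((σ y : Rˣ) : R))*h10
        · simp only [if_neg ha] at hg
          by_cases hbb : y * inv x = x*y
          · simp only [if_pos hbb] at hg
            have eb := congrArg (fun g : G => ((σ g : Rˣ) : R)) hbb
            simp only [map_mul, Units.val_mul] at eb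
            have m1 : ((σ (inv x) : Rˣ) : R) = ((σ x : Rˣ) : R) := by linear_combination ((σ (inv y) : Rˣ) : R)*eb - (((σ (inv x) : Rˣ) : R) - ((σ x : Rˣ) : R))*ht2
            have hss : ((σ x : Rˣ) : R) * ((σ x : Rˣ) : R) = 1 := by linear_combination hs2 - ((σ x : Rˣ) : R)*m1
            have ec' : ((σ (inv y) : Rˣ) : R) * ((σ x : Rˣ) : R) = ((σ y : Rˣ) : R) * ((σ x : Rˣ) : R) := by linear_combination ec2 - ((σ (inv y) : Rˣ) : R)*m1
            have m2 : ((σ (inv y) : Rˣ) : R) = ((σ y : Rˣ) : R) := by linear_combination ((σ (inv x) : Rˣ) : R)*ec' - (((σ (inv y) : Rˣ) : R) - ((σ y : Rˣ) : R))*hs2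
            have htt : ((σ y : Rˣ) : R) * ((σ y : Rˣ) : R) = 1 := by linear_combination ht2 - ((σ y : Rˣ) : R)*m2
            have k1 : ((σ x : Rˣ) : R) + ((σ y : Rˣ) : R) = 1 := by linear_combination ((σ x : Rˣ) : R)*hg + (1 - ((σ y : Rˣ) : R))*hss
            have k2 : ((σ x : Rˣ) : R)*((σ y : Rˣ) : R) + ((σ y : Rˣ) : R) = 0 := by linear_combination hg + k1
            have k3 : ((σ x : Rˣ) : R) = -1 := by linear_combination ((σ y : Rˣ) : R)*k2 - (((σ x : Rˣ) : R)+1)*htt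
            have k4 : ((σ y : Rˣ) : R) = 2 := by linear_combination -hg + (((σ y : Rˣ) : R) - 1)*k3
            have k5 : 2*((σ y : Rˣ) : R) = 0 := by linear_combination -hA + 2*hg
            have k6 : (2:R) = 0 := by linear_combination ((σ y : Rˣ) : R)*k5 - 2*htt
            have k7 : ((σ y : Rˣ) : R) = 0 := by linear_combination k4 + k6
            have h10 : (1:R) = 0 := by linear_combination ((σ y : Rˣ) : R)*k7 - htt
            linear_combination (1 + ((σ x : Rˣ) : R)*((σ y : Rˣ) : R) - ((σ x : Rˣ) : R) - ((σ y : Rˣ) : R))*h10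
          · -- S4 : only c
            simp only [if_neg hbb] at hg
            have h1 := congrArg inv hc
            rw [hmul, hinv, hinv] at h1
            have hpq : inv (x*y) = y*x := h1.symm
            have hmemp := gamma_mem inv σ hinv hcompat (x*y)
            rw [hpq, hstR] at hmemp
            have hp := hanti _ hmemp _ hmemy
            rw [expand_prod, expand_prod] at hp
            have hb2 : ((Finsupp.single ((x*y)*y) (1:R) + Finsupp.single ((x*y)*inv y) (-((σ y : Rˣ) : R))
                + Finsupp.single ((y*x)*y) (-(((σ x : Rˣ) : R)*((σ y : Rˣ) : R))) + Finsupp.single ((y*x)*inv y) ((-(((σ x : Rˣ) : R)*((σ y : Rˣ) : R)))*(-((σ y : Rˣ) : R))))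
                + (Finsupp.single (y*(x*y)) (1:R) + Finsupp.single (y*(y*x)) (-(((σ x : Rˣ) : R)*((σ y : Rˣ) : R)))
                + Finsupp.single (inv y*(x*y)) (-((σ y : Rˣ) : R)) + Finsupp.single (inv y*(y*x)) ((-((σ y : Rˣ) : R))*(-(((σ x : Rˣ) : R)*((σ y : Rˣ) : R))))) : G →₀ R)
                = 0 := congrArg MonoidAlgebra.coeff hp
            have hg2 := congrFun (congrArg DFunLike.coe hb2) (y*(x*y))
            simp only [Finsupp.add_apply, Finsupp.single_apply, Finsupp.coe_zero, Pi.zero_apply,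
              if_true] at hg2
            have c1 : (x*y)*y ≠ y*(x*y) := fun h =>
              hne (mul_right_cancel (h.trans (mul_assoc y x y).symm))
            have c3 : (y*x)*y = y*(x*y) := mul_assoc y x y
            have c4 : (y*x)*inv y ≠ y*(x*y) := fun h =>
              hy (mul_left_cancel (h.trans (mul_assoc y x y).symm))
            have c6 : y*(y*x) ≠ y*(x*y) := fun h => hne (mul_left_cancel h).symm
            have c7 : inv y*(x*y) ≠ y*(x*y) := fun h => hy (mul_right_cancel h)
            simp only [if_neg c1, if_pos c3, if_neg c4, if_neg c6, if_neg c7] at hg2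
            by_cases hi1 : (x*y)*inv y = y*(x*y)
            ·
              have ei := congrArg (fun g : G => ((σ g : Rˣ) : R)) hi1
              simp only [map_mul, Units.val_mul] at ei
              have m1 : ((σ (inv y) : Rˣ) : R) = ((σ y : Rˣ) : R) := by
                linear_combination ((σ (inv x) : Rˣ) : R)*((σ (inv y) : Rˣ) : R)*ei - (((σ (inv y) : Rˣ) : R) - ((σ y : Rˣ) : R))*(((σ y : Rˣ) : R)*((σ (inv y) : Rˣ) : R))*hs2 - (((σ (inv y) : Rˣ) : R) - ((σ y : Rˣ) : R))*ht2
              have htt : ((σ y : Rˣ) : R) * ((σ y : Rˣ) : R) = 1 := by linear_combination ht2 - ((σ y : Rˣ) : R)*m1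
              linear_combination (1 - ((σ y : Rˣ) : R))*hg + ((σ x : Rˣ) : R)*htt
            · by_cases hi2 : inv y*(y*x) = y*(x*y)
              ·
                have ei := congrArg (fun g : G => ((σ g : Rˣ) : R)) hi2
                simp only [map_mul, Units.val_mul] at ei
                have m1 : ((σ (inv y) : Rˣ) : R) = ((σ y : Rˣ) : R) := by
                  linear_combination ((σ (inv x) : Rˣ) : R)*((σ (inv y) : Rˣ) : R)*ei - (((σ (inv y) : Rˣ) : R) - ((σ y : Rˣ) : R))*(((σ y : Rˣ) : R)*((σ (inv y) : Rˣ) : R))*hs2 - (((σ (inv y) : Rˣ) : R) - ((σ y : Rˣ) : R))*ht2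
                have htt : ((σ y : Rˣ) : R) * ((σ y : Rˣ) : R) = 1 := by linear_combination ht2 - ((σ y : Rˣ) : R)*m1
                linear_combination (1 - ((σ y : Rˣ) : R))*hg + ((σ x : Rˣ) : R)*htt
              · simp only [if_neg hi1, if_neg hi2] at hg2
                have k2 : (2:R) = 0 := by linear_combination hg + hg2
                have h10 := hone2 k2
                linear_combination (1 + ((σ x : Rˣ) : R)*((σ y : Rˣ) : R) - ((σ x : Rˣ) : R) - ((σ y : Rˣ) : R))*h10
      · simp only [if_neg hc] at hg
        by_cases ha : inv y * x = x*y
        · simp only [if_pos ha] at hg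
          by_cases hbb : y * inv x = x*y
          · simp only [if_pos hbb] at hg
            have ea := congrArg (fun g : G => ((σ g : Rˣ) : R)) ha
            simp only [map_mul, Units.val_mul] at ea
            have eb := congrArg (fun g : G => ((σ g : Rˣ) : R)) hbb
            simp only [map_mul, Units.val_mul] at eb
            have m1 : ((σ (inv y) : Rˣ) : R) = ((σ y : Rˣ) : R) := by linear_combination ((σ (inv x) : Rˣ) : R)*ea - (((σ (inv y) : Rˣ) : R) - ((σ y : Rˣ) : R))*hs2
            have htt : ((σ y : Rˣ) : R) * ((σ y : Rˣ) : R) = 1 := by linear_combination ht2 - ((σ y : Rˣ) : R)*m1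
            have m2 : ((σ (inv x) : Rˣ) : R) = ((σ x : Rˣ) : R) := by linear_combination ((σ (inv y) : Rˣ) : R)*eb - (((σ (inv x) : Rˣ) : R) - ((σ x : Rˣ) : R))*ht2
            have hss : ((σ x : Rˣ) : R) * ((σ x : Rˣ) : R) = 1 := by linear_combination hs2 - ((σ x : Rˣ) : R)*m2
            have k1 : ((σ x : Rˣ) : R) + ((σ y : Rˣ) : R) = 1 := by linear_combination -hg
            have k2 : 2*(((σ x : Rˣ) : R)*((σ y : Rˣ) : R)) = 0 := by linear_combination hA + 2*k1
            have k4 : (((σ x : Rˣ) : R)+((σ y : Rˣ) : R))*(((σ x : Rˣ) : R)+((σ y : Rˣ) : R)) = 1 := by linear_combination (((σ x : Rˣ) : R)+((σ y : Rˣ) : R)+1)*k1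
            have h10 : (1:R) = 0 := by linear_combination k4 - hss - htt - k2
            linear_combination (1 + ((σ x : Rˣ) : R)*((σ y : Rˣ) : R) - ((σ x : Rˣ) : R) - ((σ y : Rˣ) : R))*h10
          · simp only [if_neg hbb] at hg
            linear_combination (1 - ((σ x : Rˣ) : R))*hg
        · simp only [if_neg ha] at hg
          by_cases hbb : y * inv x = x*y
          · simp only [if_pos hbb] at hg
            linear_combination (1 - ((σ y : Rˣ) : R))*hg
          · simp only [if_neg hbb] at hg
            linear_combination (1 + ((σ x : Rˣ) : R)*((σ y : Rˣ) : R) - ((σ x : Rˣ) : R) - ((σ y : Rˣ) : R))*hg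
  · -- commuting case
    intro hcomm
    rw [hstR]
    have n6 : y*inv x ≠ x*y := fun h => hx (mul_left_cancel (h.trans hcomm))
    have n7 : inv y*x ≠ x*y := fun h => hy (mul_right_cancel (h.trans hcomm))
    have hg := congrFun (congrArg DFunLike.coe hb) (x*y)
    simp only [Finsupp.add_apply, Finsupp.single_apply, Finsupp.coe_zero, Pi.zero_apply,
      if_true] at hg
    simp only [if_neg n1, if_neg n2, if_pos hcomm.symm, if_neg n6, if_neg n7] at hg
    by_cases hd : inv y * inv x = x*y
    · have hc : inv x * inv y = x*y := by
        rw [← hmul y x, ← hcomm, hmul]; exact hd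
      simp only [if_pos hc, if_pos hd] at hg
      constructor
      · linear_combination hg
      · linear_combination hg - hA
    · have hcn : ¬ (inv x * inv y = x*y) := by
        intro hcc
        exact hd (by rw [← hmul x y, hcomm, hmul]; exact hcc.trans hcomm)
      simp only [if_neg hcn, if_neg hd] at hg
      have k2 : (2:R) = 0 := by linear_combination hg
      constructor
      · linear_combination (1 + ((σ x : Rˣ) : R)*((σ y : Rˣ) : R)) * k2
      · linear_combination (((σ x : Rˣ) : R) + ((σ y : Rˣ) : R)) * k2
end

section
/- If (RG)^- is anticommutative and * ≠ Id on G, then there exists s ∈ Z(G) ∩ G_* with s² = 1 such that x^* ∈ {x, sx} for all x ∈ G. -/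
open Finsupp

/- ### Auxiliary material -/

section AuxLemmas

variable {R : Type} [CommRing R] {G : Type} [Group G]

lemma aux_quot_eq {p q r u : G} (h : p * q = r * u) : r⁻¹ * p = u * q⁻¹ := by
  have hp : p = r * u * q⁻¹ := by rw [eq_mul_inv_iff_mul_eq]; exact h
  rw [hp]; group

lemma ma_sub_apply (f g : MonoidAlgebra R G) (p : G) : (f - g).coeff p = f.coeff p - g.coeff p := rfl
lemma ma_add_apply (f g : MonoidAlgebra R G) (p : G) : (f + g).coeff p = f.coeff p + g.coeff p := rfl
lemma ma_zero_apply (p : G) : (0 : MonoidAlgebra R G).coeff p = 0 := rfl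

lemma aux_sigmaStar_single (inv : G → G) (σ : G →* Rˣ) (g : G) (c : R) :
    sigmaStar inv σ (MonoidAlgebra.single g c) = MonoidAlgebra.single (inv g) ((σ g : R) * c) := by
  unfold sigmaStar
  rw [MonoidAlgebra.coeff_single, Finsupp.sum_single_index (by simp)]; rfl

lemma aux_sigmaStar_sub (inv : G → G) (σ : G →* Rˣ) (α β : MonoidAlgebra R G) :
    sigmaStar inv σ (α - β) = sigmaStar inv σ α - sigmaStar inv σ β := by
  unfold sigmaStar
  rw [MonoidAlgebra.coeff_sub, Finsupp.sum_sub_index (fun x a b => by rw [mul_sub, Finsupp.single_sub]),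
    MonoidAlgebra.ofCoeff_sub]

lemma expand_pair (g g2 h h2 : G) (c d : R) :
    ((MonoidAlgebra.single g (1:R) - MonoidAlgebra.single g2 c) *
        (MonoidAlgebra.single h (1:R) - MonoidAlgebra.single h2 d)
      + (MonoidAlgebra.single h (1:R) - MonoidAlgebra.single h2 d) *
        (MonoidAlgebra.single g (1:R) - MonoidAlgebra.single g2 c)
      : MonoidAlgebra R G)
    = (((MonoidAlgebra.single (g*h) (1:R) - MonoidAlgebra.single (g*h2) d)
          - MonoidAlgebra.single (g2*h) c)
        + MonoidAlgebra.single (g2*h2) (c*d))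
      + (((MonoidAlgebra.single (h*g) (1:R) - MonoidAlgebra.single (h*g2) c)
          - MonoidAlgebra.single (h2*g) d)
        + MonoidAlgebra.single (h2*g2) (d*c)) := by
  simp only [sub_mul, mul_sub, MonoidAlgebra.single_mul_single, one_mul, mul_one]
  abel

lemma expand_single (g g2 h : G) (c : R) :
    ((MonoidAlgebra.single g (1:R) - MonoidAlgebra.single g2 c) * MonoidAlgebra.single h (1:R)
      + MonoidAlgebra.single h (1:R) *
        (MonoidAlgebra.single g (1:R) - MonoidAlgebra.single g2 c)
      : MonoidAlgebra R G)
    = ((MonoidAlgebra.single (g*h) (1:R) - MonoidAlgebra.single (g2*h) c)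
        + (MonoidAlgebra.single (h*g) (1:R) - MonoidAlgebra.single (h*g2) c)) := by
  simp only [sub_mul, mul_sub, MonoidAlgebra.single_mul_single, one_mul, mul_one]

end AuxLemmas

/-- A bundle of all the standing hypotheses. -/
structure OSetup (R : Type) [CommRing R] (G : Type) [Group G] where
  inv : G → G
  σ : G →* Rˣ
  hmul : ∀ x y : G, inv (x * y) = inv y * inv x
  hinv : ∀ x : G, inv (inv x) = x
  hcompat : ∀ x : G, x * inv x ∈ σ.ker
  hanti : ∀ α ∈ skewSet inv σ, ∀ β ∈ skewSet inv σ, α * β + β * α = 0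
  h1 : (1 : R) ≠ 0
  h2 : (2 : R) ≠ 0

namespace OSetup

variable {R : Type} [CommRing R] {G : Type} [Group G] (S : OSetup R G)

lemma sigma_inv_mul (g : G) : (S.σ (S.inv g) : R) * (S.σ g : R) = 1 := by
  have h := S.hcompat g
  rw [MonoidHom.mem_ker, map_mul] at h
  have h2 : ((S.σ g * S.σ (S.inv g) : Rˣ) : R) = 1 := by rw [h]; rfl
  rw [Units.val_mul] at h2
  rw [mul_comm]; exact h2

lemma alpha_skew (g : G) :
    (MonoidAlgebra.single g (1:R) - MonoidAlgebra.single (S.inv g) ((S.σ g : R)))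
      ∈ skewSet S.inv S.σ := by
  show sigmaStar S.inv S.σ _ = _
  rw [aux_sigmaStar_sub, aux_sigmaStar_single, aux_sigmaStar_single, S.hinv, mul_one,
    S.sigma_inv_mul g, neg_sub]

lemma single_skew (g : G) (hg1 : S.inv g = g) (hg2 : (S.σ g : R) = -1) :
    (MonoidAlgebra.single g (1:R)) ∈ skewSet S.inv S.σ := by
  show sigmaStar S.inv S.σ _ = _
  rw [aux_sigmaStar_single, hg1, hg2, neg_mul, one_mul]
  exact MonoidAlgebra.single_neg g 1

/-- From `2 α_x² = 0`: `x` commutes with `x*`, and `(x*)² = x²`. -/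
lemma comm_star (x : G) (hx : S.inv x ≠ x) :
    x * S.inv x = S.inv x * x ∧ S.inv x * S.inv x = x * x := by
  have H := S.hanti _ (S.alpha_skew x) _ (S.alpha_skew x)
  rw [expand_pair] at H
  have n1 : x * x ≠ x * S.inv x := fun h => hx (mul_left_cancel h).symm
  have n4 : S.inv x * S.inv x ≠ x * S.inv x := fun h => hx (mul_right_cancel h)
  have hcomm : S.inv x * x = x * S.inv x := by
    by_contra hc
    have E := congrArg (fun f : MonoidAlgebra R G => f.coeff (x * S.inv x)) H
    simp only [ma_add_apply, ma_sub_apply, ma_zero_apply, MonoidAlgebra.coeff_single] at E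
    rw [Finsupp.single_eq_of_ne' n1, Finsupp.single_eq_same, Finsupp.single_eq_of_ne' hc,
      Finsupp.single_eq_of_ne' n4] at E
    have h2a : (2:R) * ((S.σ x : R)) = 0 := by linear_combination -E
    exact S.h2 ((Units.mul_left_eq_zero (S.σ x)).mp h2a)
  have n1' : x * S.inv x ≠ x * x := fun h => hx (mul_left_cancel h)
  have n3' : S.inv x * x ≠ x * x := fun h => hx (mul_right_cancel h)
  have hsq : S.inv x * S.inv x = x * x := by
    by_contra hq
    have E := congrArg (fun f : MonoidAlgebra R G => f.coeff (x * x)) H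
    simp only [ma_add_apply, ma_sub_apply, ma_zero_apply, MonoidAlgebra.coeff_single] at E
    rw [Finsupp.single_eq_same, Finsupp.single_eq_of_ne' n1', Finsupp.single_eq_of_ne' n3',
      Finsupp.single_eq_of_ne' hq] at E
    have h2a : (2:R) = 0 := by linear_combination E
    exact S.h2 h2a
  exact ⟨hcomm.symm, hsq⟩

lemma s_sq (x : G) (hx : S.inv x ≠ x) :
    (S.inv x * x⁻¹) * (S.inv x * x⁻¹) = 1 := by
  obtain ⟨cx, f2x⟩ := S.comm_star x hx
  have cx' : Commute x (S.inv x) := cx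
  have hcomm : x⁻¹ * S.inv x = S.inv x * x⁻¹ := (cx'.inv_left).eq
  calc (S.inv x*x⁻¹)*(S.inv x*x⁻¹) = S.inv x*(x⁻¹*S.inv x)*x⁻¹ := by group
    _ = S.inv x*(S.inv x*x⁻¹)*x⁻¹ := by rw [hcomm]
    _ = (S.inv x*S.inv x)*(x⁻¹*x⁻¹) := by group
    _ = (x*x)*(x⁻¹*x⁻¹) := by rw [f2x]
    _ = 1 := by group

lemma s_inv (x : G) (hx : S.inv x ≠ x) :
    (S.inv x * x⁻¹)⁻¹ = S.inv x * x⁻¹ :=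
  inv_eq_of_mul_eq_one_right (S.s_sq x hx)

lemma helper1 (x y : G) (hx : S.inv x ≠ x) (hy : S.inv y ≠ y)
    (hst : S.inv x * x⁻¹ ≠ S.inv y * y⁻¹) :
    S.inv y * S.inv x ≠ y * x := by
  intro h
  have e1 : y⁻¹ * S.inv y = x * (S.inv x)⁻¹ := aux_quot_eq h
  have cy' : Commute y (S.inv y) := (S.comm_star y hy).1
  have e2 : y⁻¹ * S.inv y = S.inv y * y⁻¹ := (cy'.inv_left).eq
  have e3 : x * (S.inv x)⁻¹ = (S.inv x * x⁻¹)⁻¹ := by group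
  rw [e2, e3, S.s_inv x hx] at e1
  exact hst e1.symm

lemma helper2 (x y : G) (hx : S.inv x ≠ x) (hy : S.inv y ≠ y)
    (hst : S.inv x * x⁻¹ ≠ S.inv y * y⁻¹) :
    S.inv y * x ≠ y * S.inv x := by
  intro h
  have e1 : y⁻¹ * S.inv y = S.inv x * x⁻¹ := aux_quot_eq h
  have cy' : Commute y (S.inv y) := (S.comm_star y hy).1
  have e2 : y⁻¹ * S.inv y = S.inv y * y⁻¹ := (cy'.inv_left).eq
  rw [e2] at e1
  exact hst e1.symm

lemma helperME (x y : G) (hx : S.inv x ≠ x) (hy : S.inv y ≠ y)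
    (hst : S.inv x * x⁻¹ ≠ S.inv y * y⁻¹) :
    S.inv x * S.inv y ≠ x * y := by
  intro h
  have e1 : x⁻¹ * S.inv x = y * (S.inv y)⁻¹ := aux_quot_eq h
  have cx' : Commute x (S.inv x) := (S.comm_star x hx).1
  have e2 : x⁻¹ * S.inv x = S.inv x * x⁻¹ := (cx'.inv_left).eq
  have e3 : y * (S.inv y)⁻¹ = (S.inv y * y⁻¹)⁻¹ := by group
  rw [e2, e3, S.s_inv y hy] at e1
  exact hst e1

/-- Main evaluation of the anticommutator of `α_x`, `α_y` at the point `x*y`. -/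
lemma ME (x y : G) (hx : S.inv x ≠ x) (hy : S.inv y ≠ y)
    (hst : S.inv x * x⁻¹ ≠ S.inv y * y⁻¹) :
    (x*y = S.inv y * x ∧ (S.σ y : R) = 1) ∨ (x*y = y * S.inv x ∧ (S.σ x : R) = 1) ∨
      (x*y = S.inv y * S.inv x ∧ (S.σ y : R) * (S.σ x : R) = -1) := by
  have H := S.hanti _ (S.alpha_skew x) _ (S.alpha_skew y)
  rw [expand_pair] at H
  have E := congrArg (fun f : MonoidAlgebra R G => f.coeff (x*y)) H
  simp only [ma_add_apply, ma_sub_apply, ma_zero_apply, MonoidAlgebra.coeff_single] at E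
  have n2 : x * S.inv y ≠ x * y := fun h => hy (mul_left_cancel h)
  have n3 : S.inv x * y ≠ x * y := fun h => hx (mul_right_cancel h)
  have n4 : S.inv x * S.inv y ≠ x * y := S.helperME x y hx hy hst
  rw [Finsupp.single_eq_same, Finsupp.single_eq_of_ne' n2, Finsupp.single_eq_of_ne' n3,
    Finsupp.single_eq_of_ne' n4] at E
  by_cases c5 : y * x = x * y
  · exfalso
    have c6 : y * S.inv x ≠ x * y := fun h => hx (mul_left_cancel (h.trans c5.symm))
    have c7 : S.inv y * x ≠ x * y := fun h => hy (mul_right_cancel (h.trans c5.symm))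
    have c8 : S.inv y * S.inv x ≠ x * y :=
      fun h => S.helper1 x y hx hy hst (h.trans c5.symm)
    rw [Finsupp.single_eq_of_ne' c6, Finsupp.single_eq_of_ne' c7, Finsupp.single_eq_of_ne' c8,
      c5, Finsupp.single_eq_same] at E
    exact S.h2 (by linear_combination E)
  · rw [Finsupp.single_eq_of_ne' c5] at E
    by_cases c7 : S.inv y * x = x * y
    · left
      have c6 : y * S.inv x ≠ x * y :=
        fun h => S.helper2 x y hx hy hst (c7.trans h.symm)
      have c8 : S.inv y * S.inv x ≠ x * y :=
        fun h => hx (mul_left_cancel (h.trans c7.symm))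
      rw [Finsupp.single_eq_of_ne' c6, Finsupp.single_eq_of_ne' c8, c7,
        Finsupp.single_eq_same] at E
      exact ⟨c7.symm, by linear_combination -E⟩
    · rw [Finsupp.single_eq_of_ne' c7] at E
      by_cases c6 : y * S.inv x = x * y
      · right; left
        have c8 : S.inv y * S.inv x ≠ x * y :=
          fun h => hy (mul_right_cancel (h.trans c6.symm))
        rw [Finsupp.single_eq_of_ne' c8, c6, Finsupp.single_eq_same] at E
        exact ⟨c6.symm, by linear_combination -E⟩
      · rw [Finsupp.single_eq_of_ne' c6] at E
        by_cases c8 : S.inv y * S.inv x = x * y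
        · right; right
          rw [c8, Finsupp.single_eq_same] at E
          exact ⟨c8.symm, by linear_combination E⟩
        · rw [Finsupp.single_eq_of_ne' c8] at E
          exact absurd (by linear_combination E) S.h1

/-- Kill of case B. -/
lemma KB (x y : G) (hx : S.inv x ≠ x) (hy : S.inv y ≠ y)
    (hst : S.inv x * x⁻¹ ≠ S.inv y * y⁻¹)
    (hb : (S.σ y : R) = 1) (hB : x * y = S.inv y * x) : False := by
  obtain ⟨cx, f2x⟩ := S.comm_star x hx
  have cx' : Commute x (S.inv x) := cx
  have icx : x⁻¹ * S.inv x = S.inv x * x⁻¹ := (cx'.inv_left).eq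
  have hy' : S.inv y = x * y * x⁻¹ := by rw [eq_mul_inv_iff_mul_eq]; exact hB.symm
  have hinvz : S.inv (x*y) = (x*y) * (S.inv x * x⁻¹) := by
    rw [S.hmul, hy', mul_assoc (x*y), icx, mul_assoc]
  have hs1 : S.inv x * x⁻¹ ≠ 1 := fun h => hx (mul_inv_eq_one.mp h)
  have hzS : S.inv (x*y) ≠ x*y := by
    rw [hinvz]; intro h; exact hs1 (mul_eq_left.mp h)
  have cz := (S.comm_star (x*y) hzS).1
  rw [hinvz] at cz
  -- cz : (x*y) * ((x*y)*s) = ((x*y)*s)*(x*y)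
  have hsz : (x*y) * (S.inv x * x⁻¹) = (S.inv x * x⁻¹) * (x*y) := by
    rw [mul_assoc (x*y) (S.inv x * x⁻¹) (x*y)] at cz
    exact mul_left_cancel cz
  have hsx : (S.inv x * x⁻¹) * x = x * (S.inv x * x⁻¹) :=
    ((cx'.mul_right ((Commute.refl x).inv_right)).eq).symm
  have hxs : x * (S.inv x * x⁻¹) = S.inv x := by
    calc x * (S.inv x * x⁻¹) = (x * S.inv x) * x⁻¹ := (mul_assoc _ _ _).symm
      _ = (S.inv x * x) * x⁻¹ := by rw [cx]
      _ = S.inv x := by group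
  have hbz : (S.σ (x*y) : R) = (S.σ x : R) := by
    rw [map_mul, Units.val_mul, hb, mul_one]
  have H := S.hanti _ (S.alpha_skew x) _ (S.alpha_skew (x*y))
  rw [expand_pair, hbz] at H
  have E := congrArg (fun f : MonoidAlgebra R G => f.coeff (S.inv x * (x*y))) H
  simp only [ma_add_apply, ma_sub_apply, ma_zero_apply, MonoidAlgebra.coeff_single] at E
  -- the needed group facts
  have n1 : x * (x*y) ≠ S.inv x * (x*y) := fun h => hx (mul_right_cancel h).symm
  have e2 : x * S.inv (x*y) = S.inv x * (x*y) := by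
    rw [hinvz]
    calc x * ((x*y) * (S.inv x * x⁻¹)) = x * ((S.inv x * x⁻¹) * (x*y)) := by rw [hsz]
      _ = (x * (S.inv x * x⁻¹)) * (x*y) := (mul_assoc _ _ _).symm
      _ = S.inv x * (x*y) := by rw [hxs]
  have n4 : S.inv x * S.inv (x*y) ≠ S.inv x * (x*y) := by
    rw [hinvz]; intro h
    exact hs1 (mul_eq_left.mp (mul_left_cancel h))
  have hxyne : y * x ≠ x * y := by
    intro h3
    exact hy (mul_right_cancel (h3.trans hB)).symm
  have hkey : (x*y) * x ≠ x * (x*y) := by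
    intro h''
    exact hxyne (mul_left_cancel (a := x) (by rw [← mul_assoc]; exact h''))
  have n5 : (x*y) * x ≠ S.inv x * (x*y) := by
    intro h
    have h' : x*(y*x) = x*(S.inv x * y) := by
      calc x*(y*x) = (x*y)*x := (mul_assoc _ _ _).symm
        _ = S.inv x*(x*y) := h
        _ = (S.inv x*x)*y := (mul_assoc _ _ _).symm
        _ = (x*S.inv x)*y := by rw [cx]
        _ = x*(S.inv x*y) := mul_assoc _ _ _
    have hyx : y*x = S.inv x*y := mul_left_cancel h'
    have hx' : S.inv x = y*x*y⁻¹ := by rw [eq_mul_inv_iff_mul_eq]; exact hyx.symm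
    have hee : S.inv x * x⁻¹ = (S.inv y * y⁻¹)⁻¹ := by rw [hx', hy']; group
    exact hst (hee.trans (S.s_inv y hy))
  have hpx : S.inv x * (x*y) = (x * (x*y)) * (S.inv x * x⁻¹) := by
    calc S.inv x * (x*y) = (x * (S.inv x * x⁻¹)) * (x*y) := by rw [hxs]
      _ = x * ((S.inv x * x⁻¹) * (x*y)) := mul_assoc _ _ _
      _ = x * ((x*y) * (S.inv x * x⁻¹)) := by rw [← hsz]
      _ = (x * (x*y)) * (S.inv x * x⁻¹) := (mul_assoc _ _ _).symm
  have n6 : (x*y) * S.inv x ≠ S.inv x * (x*y) := by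
    intro h
    apply hkey
    have h' : ((x*y)*x)*(S.inv x*x⁻¹) = (x*(x*y))*(S.inv x*x⁻¹) := by
      calc ((x*y)*x)*(S.inv x*x⁻¹) = (x*y)*(x*(S.inv x*x⁻¹)) := mul_assoc _ _ _
        _ = (x*y)*S.inv x := by rw [hxs]
        _ = S.inv x*(x*y) := h
        _ = (x*(x*y))*(S.inv x*x⁻¹) := hpx
    exact mul_right_cancel h'
  have n7 : S.inv (x*y) * x ≠ S.inv x * (x*y) := by
    rw [hinvz]; intro h
    apply hkey
    have h' : ((x*y)*x)*(S.inv x*x⁻¹) = (x*(x*y))*(S.inv x*x⁻¹) := by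
      calc ((x*y)*x)*(S.inv x*x⁻¹) = (x*y)*(x*(S.inv x*x⁻¹)) := mul_assoc _ _ _
        _ = (x*y)*((S.inv x*x⁻¹)*x) := by rw [hsx]
        _ = ((x*y)*(S.inv x*x⁻¹))*x := (mul_assoc _ _ _).symm
        _ = S.inv x*(x*y) := h
        _ = (x*(x*y))*(S.inv x*x⁻¹) := hpx
    exact mul_right_cancel h'
  have n8 : S.inv (x*y) * S.inv x ≠ S.inv x * (x*y) := by
    rw [hinvz]; intro h
    apply n5
    have h' : ((x*y)*(S.inv x*x⁻¹))*S.inv x = (x*y)*x := by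
      calc ((x*y)*(S.inv x*x⁻¹))*S.inv x
          = ((x*y)*(S.inv x*x⁻¹))*(x*(S.inv x*x⁻¹)) := by rw [hxs]
        _ = ((x*y)*((S.inv x*x⁻¹)*x))*(S.inv x*x⁻¹) := by group
        _ = ((x*y)*(x*(S.inv x*x⁻¹)))*(S.inv x*x⁻¹) := by rw [hsx]
        _ = ((x*y)*x)*((S.inv x*x⁻¹)*(S.inv x*x⁻¹)) := by group
        _ = ((x*y)*x)*1 := by rw [S.s_sq x hx]
        _ = (x*y)*x := mul_one _
    rw [← h']; exact h
  rw [Finsupp.single_eq_of_ne' n1, e2, Finsupp.single_eq_same,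
    Finsupp.single_eq_of_ne' n4, Finsupp.single_eq_of_ne' n5, Finsupp.single_eq_of_ne' n6,
    Finsupp.single_eq_of_ne' n7, Finsupp.single_eq_of_ne' n8] at E
  have h2a : (2:R) * ((S.σ x : R)) = 0 := by linear_combination -E
  exact S.h2 ((Units.mul_left_eq_zero (S.σ x)).mp h2a)

/-- Kill of the combination (C, B̂). -/
lemma K3 (x y : G) (hx : S.inv x ≠ x) (hy : S.inv y ≠ y)
    (hst : S.inv x * x⁻¹ ≠ S.inv y * y⁻¹)
    (hC : x * y = y * S.inv x) (hB' : y * x = x * S.inv y) : False := by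
  have e := congrArg S.inv hC
  rw [S.hmul, S.hmul, S.hinv] at e
  -- e : S.inv y * S.inv x = S.inv (S.inv x) * S.inv y = x * S.inv y
  rw [← hB'] at e
  exact S.helper1 x y hx hy hst e

/-- Kill of the combinations (C, D̂) and (D, B̂). -/
lemma K4 (x y : G) (hx : S.inv x ≠ x) (hy : S.inv y ≠ y)
    (hC : x * y = y * S.inv x) (hD' : y * x = S.inv x * S.inv y)
    (hs : (S.σ y : R) * (S.σ x : R) = -1) : False := by
  have hsym : S.inv (y*x) = y*x := by rw [S.hmul, ← hD']
  have hsg : (S.σ (y*x) : R) = -1 := by rw [map_mul, Units.val_mul, hs]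
  have H := S.hanti _ (S.alpha_skew y) _ (S.single_skew (y*x) hsym hsg)
  rw [expand_single] at H
  have E := congrArg (fun f : MonoidAlgebra R G => f.coeff (y*(y*x))) H
  simp only [ma_add_apply, ma_sub_apply, ma_zero_apply, MonoidAlgebra.coeff_single] at E
  have n2 : S.inv y * (y*x) ≠ y * (y*x) := fun h => hy (mul_right_cancel h)
  have n3 : (y*x) * y ≠ y * (y*x) := by
    intro h
    have h' : x*y = y*x := mul_left_cancel (a := y) (by rw [← mul_assoc]; exact h)
    have : y * S.inv x = y * x := hC.symm.trans h'
    exact hx (mul_left_cancel this)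
  have n4 : (y*x) * S.inv y ≠ y * (y*x) := by
    intro h
    have h' : x * S.inv y = y*x := mul_left_cancel (a := y) (by rw [← mul_assoc]; exact h)
    rw [hD'] at h'
    exact hx (mul_right_cancel h').symm
  rw [Finsupp.single_eq_same, Finsupp.single_eq_of_ne' n2, Finsupp.single_eq_of_ne' n3,
    Finsupp.single_eq_of_ne' n4] at E
  exact S.h1 (by linear_combination E)

/-- Kill of the combination (D, D̂). -/
lemma K6 (x y : G) (hx : S.inv x ≠ x) (hy : S.inv y ≠ y)
    (hst : S.inv x * x⁻¹ ≠ S.inv y * y⁻¹)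
    (hD : x * y = S.inv y * S.inv x)
    (hs : (S.σ x : R) * (S.σ y : R) = -1) : False := by
  have hsym : S.inv (x*y) = x*y := by rw [S.hmul, ← hD]
  have hsg : (S.σ (x*y) : R) = -1 := by rw [map_mul, Units.val_mul, hs]
  have H := S.hanti _ (S.alpha_skew x) _ (S.single_skew (x*y) hsym hsg)
  rw [expand_single] at H
  have E := congrArg (fun f : MonoidAlgebra R G => f.coeff (x*(x*y))) H
  simp only [ma_add_apply, ma_sub_apply, ma_zero_apply, MonoidAlgebra.coeff_single] at E
  have n2 : S.inv x * (x*y) ≠ x * (x*y) := fun h => hx (mul_right_cancel h)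
  have n3 : (x*y) * x ≠ x * (x*y) := by
    intro h
    have h' : y*x = x*y := mul_left_cancel (a := x) (by rw [← mul_assoc]; exact h)
    exact S.helper1 x y hx hy hst (hD.symm.trans h'.symm)
  have n4 : (x*y) * S.inv x ≠ x * (x*y) := by
    intro h
    have h' : y * S.inv x = x*y := mul_left_cancel (a := x) (by rw [← mul_assoc]; exact h)
    rw [hD] at h'
    exact hy (mul_right_cancel h').symm
  rw [Finsupp.single_eq_same, Finsupp.single_eq_of_ne' n2, Finsupp.single_eq_of_ne' n3,
    Finsupp.single_eq_of_ne' n4] at E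
  exact S.h1 (by linear_combination E)

/-- The main uniqueness result : `x* x⁻¹` is the same for all non-symmetric `x`. -/
lemma sEq (x y : G) (hx : S.inv x ≠ x) (hy : S.inv y ≠ y) :
    S.inv x * x⁻¹ = S.inv y * y⁻¹ := by
  by_contra hst
  have hst' : S.inv y * y⁻¹ ≠ S.inv x * x⁻¹ := fun h => hst h.symm
  have d1 := S.ME x y hx hy hst
  have d2 := S.ME y x hy hx hst'
  rcases d1 with ⟨hB, hb⟩ | ⟨hC, ha⟩ | ⟨hD, hab⟩
  · exact S.KB x y hx hy hst hb hB
  · rcases d2 with ⟨hB', hb'⟩ | ⟨hC', ha'⟩ | ⟨hD', hab'⟩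
    · exact S.KB y x hy hx hst' hb' hB'
    · exact S.K3 x y hx hy hst hC hC'
    · exact S.K4 x y hx hy hC hD' (by rw [mul_comm]; exact hab')
  · rcases d2 with ⟨hB', hb'⟩ | ⟨hC', ha'⟩ | ⟨hD', hab'⟩
    · exact S.KB y x hy hx hst' hb' hB'
    · exact S.K4 y x hy hx hC' hD (by rw [mul_comm]; exact hab)
    · exact S.K6 x y hx hy hst hD (by rw [mul_comm]; exact hab)

end OSetup

theorem stmt15 {R : Type} [CommRing R] (hchar : ringChar R ≠ 2) {G : Type} [Group G]
    (inv : G → G) (hmul : ∀ x y : G, inv (x * y) = inv y * inv x)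
    (hinv : ∀ x : G, inv (inv x) = x) (hne : inv ≠ id) (σ : G →* Rˣ) (hnt : σ ≠ 1)
    (hcompat : ∀ x : G, x * inv x ∈ σ.ker)
    (hanti : ∀ α ∈ skewSet inv σ, ∀ β ∈ skewSet inv σ, α * β + β * α = 0) :
    ∃ s : G, s ∈ Subgroup.center G ∧ inv s = s ∧ s ^ 2 = 1 ∧
      ∀ x : G, inv x = x ∨ inv x = s * x := by
  have hNT : Nontrivial R := by
    by_contra h
    rw [not_nontrivial_iff_subsingleton] at h
    exact hnt (by ext g; exact congrArg Units.val (Subsingleton.elim _ _))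
  have h1 : (1:R) ≠ 0 := one_ne_zero
  have h2 : (2:R) ≠ 0 := by
    intro h2'
    have h2n : ((2:ℕ) : R) = 0 := by norm_num at h2' ⊢; exact h2'
    have hdvd : ringChar R ∣ 2 := (ringChar.spec R 2).mp h2n
    rcases (Nat.dvd_prime Nat.prime_two).mp hdvd with h | h
    · have h1' : ((1:ℕ) : R) = 0 := (ringChar.spec R 1).mpr (by rw [h])
      simp at h1'
    · exact hchar h
  let S : OSetup R G := ⟨inv, σ, hmul, hinv, hcompat, hanti, h1, h2⟩
  obtain ⟨x₀, hx₀⟩ : ∃ a, inv a ≠ id a := Function.ne_iff.mp hne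
  have hx₀ : inv x₀ ≠ x₀ := hx₀
  refine ⟨inv x₀ * x₀⁻¹, ?_, ?_, ?_, ?_⟩
  · -- centrality
    rw [Subgroup.mem_center_iff]
    intro g
    by_cases hg : inv g = g
    · -- g symmetric: use z = g * x₀ * g
      have hinvz : inv (g*x₀*g) = g * inv x₀ * g := by
        rw [hmul (g*x₀) g, hmul g x₀, hg, ← mul_assoc]
      have hzne : inv (g*x₀*g) ≠ g*x₀*g := by
        rw [hinvz]; intro h
        exact hx₀ (mul_left_cancel (mul_right_cancel h))
      have e := S.sEq (g*x₀*g) x₀ hzne hx₀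
      rw [show S.inv (g*x₀*g) = g * inv x₀ * g from hinvz] at e
      have e2 : (g*inv x₀*g)*(g*x₀*g)⁻¹ = g*(inv x₀*x₀⁻¹)*g⁻¹ := by group
      rw [e2] at e
      calc g * (inv x₀ * x₀⁻¹) = (g*(inv x₀*x₀⁻¹)*g⁻¹)*g := by group
        _ = (inv x₀ * x₀⁻¹) * g := by rw [e]
    · -- g nonsymmetric
      have e := S.sEq g x₀ hg hx₀
      have cg := (S.comm_star g hg).1
      rw [show S.inv g * g⁻¹ = inv g * g⁻¹ from rfl] at e
      rw [← e]
      calc g*(inv g*g⁻¹) = (g*inv g)*g⁻¹ := (mul_assoc _ _ _).symm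
        _ = (inv g*g)*g⁻¹ := by rw [cg]
        _ = inv g := by group
        _ = (inv g*g⁻¹)*g := by group
  · -- inv s = s
    have hone : inv (1:G) = 1 := by
      have h := hmul 1 1
      rw [mul_one] at h
      exact (left_eq_mul.mp h)
    have hiv : inv (x₀⁻¹) = (inv x₀)⁻¹ := by
      have h := hmul x₀⁻¹ x₀
      rw [inv_mul_cancel, hone] at h
      exact eq_inv_of_mul_eq_one_right h.symm
    rw [hmul, hiv, hinv]
    have f2 := (S.comm_star x₀ hx₀).2
    have key : inv x₀ * ((inv x₀)⁻¹ * x₀) * x₀ = inv x₀ * (inv x₀ * x₀⁻¹) * x₀ := by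
      have l : inv x₀ * ((inv x₀)⁻¹ * x₀) * x₀ = x₀ * x₀ := by group
      have r : inv x₀ * (inv x₀ * x₀⁻¹) * x₀ = inv x₀ * inv x₀ := by group
      rw [l, r]
      exact f2.symm
    exact mul_left_cancel (mul_right_cancel key)
  · -- s² = 1
    rw [sq]
    exact S.s_sq x₀ hx₀
  · -- the dichotomy
    intro x
    by_cases hxx : inv x = x
    · exact Or.inl hxx
    · right
      have e := S.sEq x x₀ hxx hx₀
      rw [show S.inv x * x⁻¹ = inv x * x⁻¹ from rfl] at e
      rw [← e]
      group
end
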